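/- For a categorical ring R, the set π₀(R) of isomorphism classes of objects, with addition and multiplication induced by + and ·, is an associative unital ring, and π₁(R) = Aut_R(0) is an abelian group carrying a natural π₀(R)-bimodule structure. -/

import Mathlib

open CategoryTheory MonoidalCategory

universe v u

/-- A categorical group: a monoidal groupoid in which every object has a weak inverse. -/
class CategoricalGroup (A : Type u) [Groupoid.{v} A] [MonoidalCategory A] where
  neg : A → A
  iota : ∀ a : A, neg a ⊗ a ≅ 𝟙_ A

/-- The canonical interchange isomorphism `(a+b)+(c+d) ⟶ (a+c)+(b+d)` of a
braided (symmetric) monoidal category, built from associators and the braiding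
of the two middle factors. -/
def interchange {A : Type u} [Category.{v} A] [MonoidalCategory A] [BraidedCategory A]
    (a b c d : A) : (a ⊗ b) ⊗ (c ⊗ d) ⟶ (a ⊗ c) ⊗ (b ⊗ d) :=
  (α_ a b (c ⊗ d)).hom ≫
  (a ◁ (α_ b c d).inv) ≫
  (a ◁ ((β_ b c).hom ▷ d)) ≫
  (a ◁ (α_ c b d).hom) ≫
  (α_ a c (b ⊗ d)).inv

/-- A categorical ring in the sense of Jibladze–Pirashvili: a symmetric
categorical group `(R, ⊗ = +, 𝟙_ = 0)` together with a multiplication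
bifunctor, unit object `1`, associativity, unitality and distributivity
isomorphisms, subject to the coherence axioms. -/
class CategoricalRing (R : Type u) [Groupoid.{v} R] [MonoidalCategory R]
    [SymmetricCategory R] [CategoricalGroup R] where
  /-- multiplication on objects -/
  mul : R → R → R
  /-- multiplication of morphisms (the bifunctor on morphisms) -/
  mulHom : ∀ {a b c d : R}, (a ⟶ b) → (c ⟶ d) → (mul a c ⟶ mul b d)
  mulHom_id : ∀ a c : R, mulHom (𝟙 a) (𝟙 c) = 𝟙 (mul a c)
  mulHom_comp : ∀ {a b c d e f : R} (g : a ⟶ b) (g' : b ⟶ c) (h : d ⟶ e) (h' : e ⟶ f),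
    mulHom (g ≫ g') (h ≫ h') = mulHom g h ≫ mulHom g' h'
  /-- the multiplicative unit object -/
  one : R
  /-- associativity constraint `(rs)t ≅ r(st)` -/
  massoc : ∀ r s t : R, mul (mul r s) t ≅ mul r (mul s t)
  massoc_natural : ∀ {r r' s s' t t' : R} (f : r ⟶ r') (g : s ⟶ s') (h : t ⟶ t'),
    mulHom (mulHom f g) h ≫ (massoc r' s' t').hom = (massoc r s t).hom ≫ mulHom f (mulHom g h)
  /-- left unit constraint `1r ≅ r` -/
  lunit : ∀ r : R, mul one r ≅ r
  /-- right unit constraint `r1 ≅ r` -/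
  runit : ∀ r : R, mul r one ≅ r
  lunit_natural : ∀ {r r' : R} (f : r ⟶ r'),
    mulHom (𝟙 one) f ≫ (lunit r').hom = (lunit r).hom ≫ f
  runit_natural : ∀ {r r' : R} (f : r ⟶ r'),
    mulHom f (𝟙 one) ≫ (runit r').hom = (runit r).hom ≫ f
  /-- left distributivity constraint `r(s₀+s₁) ≅ rs₀+rs₁` -/
  ldistrib : ∀ r s₀ s₁ : R, mul r (s₀ ⊗ s₁) ≅ mul r s₀ ⊗ mul r s₁
  /-- right distributivity constraint `(r₀+r₁)s ≅ r₀s+r₁s` -/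
  rdistrib : ∀ r₀ r₁ s : R, mul (r₀ ⊗ r₁) s ≅ mul r₀ s ⊗ mul r₁ s
  ldistrib_natural : ∀ {r r' s₀ s₀' s₁ s₁' : R} (f : r ⟶ r') (g₀ : s₀ ⟶ s₀') (g₁ : s₁ ⟶ s₁'),
    mulHom f (g₀ ⊗ₘ g₁) ≫ (ldistrib r' s₀' s₁').hom =
      (ldistrib r s₀ s₁).hom ≫ (mulHom f g₀ ⊗ₘ mulHom f g₁)
  rdistrib_natural : ∀ {r₀ r₀' r₁ r₁' s s' : R} (f₀ : r₀ ⟶ r₀') (f₁ : r₁ ⟶ r₁') (g : s ⟶ s'),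
    mulHom (f₀ ⊗ₘ f₁) g ≫ (rdistrib r₀' r₁' s').hom =
      (rdistrib r₀ r₁ s).hom ≫ (mulHom f₀ g ⊗ₘ mulHom f₁ g)
  /-- pentagon coherence for the multiplicative associativity -/
  mpentagon : ∀ r s t u : R,
    mulHom (massoc r s t).hom (𝟙 u) ≫ (massoc r (mul s t) u).hom ≫
      mulHom (𝟙 r) (massoc s t u).hom =
    (massoc (mul r s) t u).hom ≫ (massoc r s (mul t u)).hom
  /-- triangle coherence for the multiplicative units -/
  mtriangle : ∀ r s : R,
    (massoc r one s).hom ≫ mulHom (𝟙 r) (lunit s).hom = mulHom (runit r).hom (𝟙 s)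
  /-- compatibility of `massoc` with left distributivity -/
  assoc_ldistrib : ∀ r s t₀ t₁ : R,
    (massoc r s (t₀ ⊗ t₁)).hom ≫ mulHom (𝟙 r) (ldistrib s t₀ t₁).hom ≫
      (ldistrib r (mul s t₀) (mul s t₁)).hom =
    (ldistrib (mul r s) t₀ t₁).hom ≫ ((massoc r s t₀).hom ⊗ₘ (massoc r s t₁).hom)
  /-- compatibility of `massoc` with the two distributivities (middle diagram) -/
  ldistrib_rdistrib_assoc : ∀ r s₀ s₁ t : R,
    mulHom (ldistrib r s₀ s₁).hom (𝟙 t) ≫ (rdistrib (mul r s₀) (mul r s₁) t).hom ≫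
      ((massoc r s₀ t).hom ⊗ₘ (massoc r s₁ t).hom) =
    (massoc r (s₀ ⊗ s₁) t).hom ≫ mulHom (𝟙 r) (rdistrib s₀ s₁ t).hom ≫
      (ldistrib r (mul s₀ t) (mul s₁ t)).hom
  /-- compatibility of `massoc` with right distributivity -/
  assoc_rdistrib : ∀ r₀ r₁ s t : R,
    mulHom (rdistrib r₀ r₁ s).hom (𝟙 t) ≫ (rdistrib (mul r₀ s) (mul r₁ s) t).hom ≫
      ((massoc r₀ s t).hom ⊗ₘ (massoc r₁ s t).hom) =
    (massoc (r₀ ⊗ r₁) s t).hom ≫ (rdistrib r₀ r₁ (mul s t)).hom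
  /-- compatibility of the unit constraints with distributivity -/
  lunit_distrib : ∀ r₀ r₁ : R,
    (ldistrib one r₀ r₁).hom ≫ ((lunit r₀).hom ⊗ₘ (lunit r₁).hom) = (lunit (r₀ ⊗ r₁)).hom
  runit_distrib : ∀ r₀ r₁ : R,
    (rdistrib r₀ r₁ one).hom ≫ ((runit r₀).hom ⊗ₘ (runit r₁).hom) = (runit (r₀ ⊗ r₁)).hom
  /-- compatibility of left distributivity with the interchange -/
  ldistrib_interchange : ∀ r s₀₀ s₀₁ s₁₀ s₁₁ : R,
    (ldistrib r (s₀₀ ⊗ s₀₁) (s₁₀ ⊗ s₁₁)).hom ≫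
      ((ldistrib r s₀₀ s₀₁).hom ⊗ₘ (ldistrib r s₁₀ s₁₁).hom) ≫
      interchange (mul r s₀₀) (mul r s₀₁) (mul r s₁₀) (mul r s₁₁) =
    mulHom (𝟙 r) (interchange s₀₀ s₀₁ s₁₀ s₁₁) ≫
      (ldistrib r (s₀₀ ⊗ s₁₀) (s₀₁ ⊗ s₁₁)).hom ≫
      ((ldistrib r s₀₀ s₁₀).hom ⊗ₘ (ldistrib r s₀₁ s₁₁).hom)
  /-- compatibility of the two distributivities with the interchange -/
  distrib_interchange : ∀ r₀ r₁ s₀ s₁ : R,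
    (rdistrib r₀ r₁ (s₀ ⊗ s₁)).hom ≫
      ((ldistrib r₀ s₀ s₁).hom ⊗ₘ (ldistrib r₁ s₀ s₁).hom) ≫
      interchange (mul r₀ s₀) (mul r₀ s₁) (mul r₁ s₀) (mul r₁ s₁) =
    (ldistrib (r₀ ⊗ r₁) s₀ s₁).hom ≫
      ((rdistrib r₀ r₁ s₀).hom ⊗ₘ (rdistrib r₀ r₁ s₁).hom)
  /-- compatibility of right distributivity with the interchange -/
  rdistrib_interchange : ∀ r₀₀ r₀₁ r₁₀ r₁₁ s : R,
    (rdistrib (r₀₀ ⊗ r₀₁) (r₁₀ ⊗ r₁₁) s).hom ≫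
      ((rdistrib r₀₀ r₀₁ s).hom ⊗ₘ (rdistrib r₁₀ r₁₁ s).hom) ≫
      interchange (mul r₀₀ s) (mul r₀₁ s) (mul r₁₀ s) (mul r₁₁ s) =
    mulHom (interchange r₀₀ r₀₁ r₁₀ r₁₁) (𝟙 s) ≫
      (rdistrib (r₀₀ ⊗ r₁₀) (r₀₁ ⊗ r₁₁) s).hom ≫
      ((rdistrib r₀₀ r₁₀ s).hom ⊗ₘ (rdistrib r₀₁ r₁₁ s).hom)

open CategoricalRing

/-- The setoid of objects of a category under isomorphism. -/
def isoSetoid (A : Type u) [Category.{v} A] : Setoid A :=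
  ⟨fun x y => Nonempty (x ≅ y),
    ⟨fun x => ⟨Iso.refl x⟩, fun ⟨e⟩ => ⟨e.symm⟩, fun ⟨e⟩ ⟨f⟩ => ⟨e.trans f⟩⟩⟩

/-- `π₀`: isomorphism classes of objects. -/
def Pi0 (A : Type u) [Category.{v} A] : Type u := Quotient (isoSetoid A)

/-- The isomorphism class of an object. -/
def mkPi0 {A : Type u} [Category.{v} A] (a : A) : Pi0 A := Quotient.mk (isoSetoid A) a

/-- `β ∈ π₁` is the deviation of the parallel morphisms `α, α' : x ⟶ y`. -/
def IsDeviation {A : Type u} [Category.{v} A] [MonoidalCategory A]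
    {x y : A} (α α' : x ⟶ y) (β : 𝟙_ A ⟶ 𝟙_ A) : Prop :=
  (α ⊗ₘ β) ≫ (ρ_ y).hom = (ρ_ x).hom ≫ α'

/-- The endomorphism of `0` with deviation `β` from the identity. -/
def devRep {A : Type u} [Category.{v} A] [MonoidalCategory A]
    (β : 𝟙_ A ⟶ 𝟙_ A) : 𝟙_ A ⟶ 𝟙_ A :=
  (ρ_ (𝟙_ A)).inv ≫ ((𝟙 (𝟙_ A)) ⊗ₘ β) ≫ (ρ_ (𝟙_ A)).hom

variable (R : Type u) [Groupoid.{v} R] [MonoidalCategory R] [SymmetricCategory R]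
  [CategoricalGroup R] [CategoricalRing R]

/-- Compatibility of a ring structure on `π₀(R)` with the structure of the
categorical ring: addition, multiplication, zero and one are induced by
`⊗ = +`, `·`, `0` and `1` of `R`. -/
def Pi0RingCompat (inst : Ring (Pi0 R)) : Prop :=
  letI := inst
  (∀ a b : R, mkPi0 a + mkPi0 b = mkPi0 (a ⊗ b)) ∧
  (∀ a b : R, mkPi0 a * mkPi0 b = mkPi0 (mul a b)) ∧
  ((0 : Pi0 R) = mkPi0 (𝟙_ R)) ∧ ((1 : Pi0 R) = mkPi0 (one : R))

/-- `lsmul`/`rsmul` form a `π₀(R)`-bimodule structure on `π₁(R)`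
(whose addition is composition of automorphisms of `0`). -/
def Pi1BimoduleCompat (inst : Ring (Pi0 R))
    (lsmul : Pi0 R → (𝟙_ R ⟶ 𝟙_ R) → (𝟙_ R ⟶ 𝟙_ R))
    (rsmul : (𝟙_ R ⟶ 𝟙_ R) → Pi0 R → (𝟙_ R ⟶ 𝟙_ R)) : Prop :=
  letI := inst
  (∀ x y β, lsmul (x * y) β = lsmul x (lsmul y β)) ∧
  (∀ β, lsmul 1 β = β) ∧
  (∀ x β γ, lsmul x (β ≫ γ) = lsmul x β ≫ lsmul x γ) ∧
  (∀ x y β, lsmul (x + y) β = lsmul x β ≫ lsmul y β) ∧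
  (∀ β, lsmul 0 β = 𝟙 (𝟙_ R)) ∧
  (∀ x y β, rsmul β (x * y) = rsmul (rsmul β x) y) ∧
  (∀ β, rsmul β 1 = β) ∧
  (∀ x β γ, rsmul (β ≫ γ) x = rsmul β x ≫ rsmul γ x) ∧
  (∀ x y β, rsmul β (x + y) = rsmul β x ≫ rsmul β y) ∧
  (∀ β, rsmul β 0 = 𝟙 (𝟙_ R)) ∧
  (∀ x y β, rsmul (lsmul x β) y = lsmul x (rsmul β y))

set_option linter.unusedSectionVars false
namespace CatRingAux

open CategoricalGroup

variable {R}

/-! ### Generalities on endomorphisms of the additive unit -/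

theorem unit_conj (β γ : 𝟙_ R ⟶ 𝟙_ R) :
    (ρ_ (𝟙_ R)).inv ≫ (β ⊗ₘ γ) ≫ (ρ_ (𝟙_ R)).hom = β ≫ γ := by
  rw [MonoidalCategory.tensorHom_def]
  simp [unitors_equal, unitors_inv_equal]

theorem unit_conj' (β γ : 𝟙_ R ⟶ 𝟙_ R) :
    (ρ_ (𝟙_ R)).inv ≫ (β ⊗ₘ γ) ≫ (ρ_ (𝟙_ R)).hom = γ ≫ β := by
  rw [tensorHom_def']
  simp [unitors_equal, unitors_inv_equal]

theorem end_comm (β γ : 𝟙_ R ⟶ 𝟙_ R) : β ≫ γ = γ ≫ β :=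
  (unit_conj β γ).symm.trans (unit_conj' β γ)

theorem devRep_eq (β : 𝟙_ R ⟶ 𝟙_ R) : devRep β = β := by
  simp [devRep, id_tensorHom, unitors_equal, unitors_inv_equal]

/-- Conjugation of an endomorphism of an object isomorphic to `0` into `π₁`. -/
def conj {x : R} (f : x ≅ 𝟙_ R) (φ : x ⟶ x) : 𝟙_ R ⟶ 𝟙_ R := f.inv ≫ φ ≫ f.hom

theorem conj_indep {x : R} (f g : x ≅ 𝟙_ R) (φ : x ⟶ x) : conj f φ = conj g φ := by
  have h := end_comm (g.inv ≫ f.hom) (f.inv ≫ (φ ≫ g.hom))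
  simp only [Category.assoc, Iso.hom_inv_id_assoc, Iso.inv_hom_id_assoc] at h
  simpa [conj] using h.symm

theorem conj_comp {x : R} (f : x ≅ 𝟙_ R) (φ ψ : x ⟶ x) :
    conj f (φ ≫ ψ) = conj f φ ≫ conj f ψ := by
  simp [conj]

theorem conj_trans {x y : R} (g : x ≅ y) (f : y ≅ 𝟙_ R) (φ : x ⟶ x) :
    conj (g ≪≫ f) φ = conj f (g.inv ≫ φ ≫ g.hom) := by
  simp [conj]

theorem conj_tensor {x y : R} (f : x ≅ 𝟙_ R) (g : y ≅ 𝟙_ R) (φ : x ⟶ x) (ψ : y ⟶ y) :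
    conj (tensorIso f g ≪≫ ρ_ (𝟙_ R)) (φ ⊗ₘ ψ) = conj f φ ≫ conj g ψ := by
  rw [← unit_conj (conj f φ) (conj g ψ)]
  simp only [conj, Iso.trans_inv, Iso.trans_hom, tensorIso_inv, tensorIso_hom,
    Category.assoc, tensorHom_comp_tensorHom, tensorHom_comp_tensorHom_assoc]

theorem dev_general {x : R} (f : x ≅ 𝟙_ R) (β : 𝟙_ R ⟶ 𝟙_ R) :
    (𝟙 x ⊗ₘ β) ≫ (ρ_ x).hom = (ρ_ x).hom ≫ (f.hom ≫ β ≫ f.inv) := by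
  have hdec : x ◁ β = f.hom ▷ 𝟙_ R ≫ 𝟙_ R ◁ β ≫ f.inv ▷ 𝟙_ R := by
    rw [← whisker_exchange_assoc, ← comp_whiskerRight, f.hom_inv_id]
    simp
  rw [id_tensorHom, hdec]
  simp [unitors_equal, unitors_inv_equal]

theorem dev_conj {x : R} (f : x ≅ 𝟙_ R) (φ : x ⟶ x) :
    (𝟙 x ⊗ₘ conj f φ) ≫ (ρ_ x).hom = (ρ_ x).hom ≫ φ := by
  rw [dev_general f (conj f φ)]
  simp [conj]

/-! ### Basic isomorphism constructions -/

/-- The multiplication of isomorphisms. -/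
def mulIso {a b c d : R} (e : a ≅ b) (f : c ≅ d) : mul a c ≅ mul b d where
  hom := mulHom e.hom f.hom
  inv := mulHom e.inv f.inv
  hom_inv_id := by rw [← mulHom_comp]; simp [mulHom_id]
  inv_hom_id := by rw [← mulHom_comp]; simp [mulHom_id]

@[simp] theorem mulIso_hom {a b c d : R} (e : a ≅ b) (f : c ≅ d) :
    (mulIso e f).hom = mulHom e.hom f.hom := rfl

@[simp] theorem mulIso_inv {a b c d : R} (e : a ≅ b) (f : c ≅ d) :
    (mulIso e f).inv = mulHom e.inv f.inv := rfl

/-- Weak inverses are preserved by isomorphism. -/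
def negIso {a b : R} (e : a ≅ b) : neg a ≅ neg b :=
  (ρ_ (neg a)).symm ≪≫
    whiskerLeftIso (neg a) ((β_ b (neg b) ≪≫ iota b).symm) ≪≫
    whiskerLeftIso (neg a) (whiskerRightIso e.symm (neg b)) ≪≫
    (α_ (neg a) a (neg b)).symm ≪≫
    whiskerRightIso (iota a) (neg b) ≪≫ λ_ (neg b)

/-- An idempotent object of a categorical group is isomorphic to `0`. -/
def idemIso {a : R} (k : a ≅ a ⊗ a) : a ≅ 𝟙_ R :=
  (λ_ a).symm ≪≫ whiskerRightIso (iota a).symm a ≪≫ α_ (neg a) a a ≪≫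
    whiskerLeftIso (neg a) k.symm ≪≫ iota a

/-- `r · 0 ≅ 0`. -/
def mulZeroIso (r : R) : mul r (𝟙_ R) ≅ 𝟙_ R :=
  idemIso (mulIso (Iso.refl r) (λ_ (𝟙_ R)).symm ≪≫ ldistrib r (𝟙_ R) (𝟙_ R))

/-- `0 · r ≅ 0`. -/
def zeroMulIso (r : R) : mul (𝟙_ R) r ≅ 𝟙_ R :=
  idemIso (mulIso (λ_ (𝟙_ R)).symm (Iso.refl r) ≪≫ rdistrib (𝟙_ R) (𝟙_ R) r)

/-! ### The ring structure on `π₀` -/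

theorem mkPi0_eq {a b : R} (e : a ≅ b) : mkPi0 a = mkPi0 b := Quotient.sound ⟨e⟩

theorem pi0_rel {a b : R} (h : (isoSetoid R).r a b) : Nonempty (a ≅ b) := h

def pAdd : Pi0 R → Pi0 R → Pi0 R :=
  Quotient.lift₂ (fun a b => mkPi0 (a ⊗ b))
    (fun _ _ _ _ h₁ h₂ =>
      (pi0_rel h₁).elim fun e => (pi0_rel h₂).elim fun e' => mkPi0_eq (tensorIso e e'))

def pMul : Pi0 R → Pi0 R → Pi0 R :=
  Quotient.lift₂ (fun a b => mkPi0 (mul a b))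
    (fun _ _ _ _ h₁ h₂ =>
      (pi0_rel h₁).elim fun e => (pi0_rel h₂).elim fun e' => mkPi0_eq (mulIso e e'))

def pNeg : Pi0 R → Pi0 R :=
  Quotient.lift (fun a => mkPi0 (neg a))
    (fun _ _ h => (pi0_rel h).elim fun e => mkPi0_eq (negIso e))

instance : Zero (Pi0 R) := ⟨mkPi0 (𝟙_ R)⟩
instance : Add (Pi0 R) := ⟨pAdd⟩
instance : Neg (Pi0 R) := ⟨pNeg⟩
instance : Mul (Pi0 R) := ⟨pMul⟩
instance : One (Pi0 R) := ⟨mkPi0 (one : R)⟩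

variable (R)

/-- The ring structure on `π₀(R)`. -/
def pi0Ring : Ring (Pi0 R) where
  add := pAdd
  add_assoc x y z := by
    induction x using Quotient.ind
    induction y using Quotient.ind
    induction z using Quotient.ind
    exact mkPi0_eq (α_ _ _ _)
  zero := mkPi0 (𝟙_ R)
  zero_add x := by
    induction x using Quotient.ind
    exact mkPi0_eq (λ_ _)
  add_zero x := by
    induction x using Quotient.ind
    exact mkPi0_eq (ρ_ _)
  nsmul := nsmulRec
  neg := pNeg
  zsmul := zsmulRec
  neg_add_cancel x := by
    induction x using Quotient.ind
    exact mkPi0_eq (iota _)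
  add_comm x y := by
    induction x using Quotient.ind
    induction y using Quotient.ind
    exact mkPi0_eq (β_ _ _)
  mul := pMul
  left_distrib x y z := by
    induction x using Quotient.ind
    induction y using Quotient.ind
    induction z using Quotient.ind
    exact mkPi0_eq (ldistrib _ _ _)
  right_distrib x y z := by
    induction x using Quotient.ind
    induction y using Quotient.ind
    induction z using Quotient.ind
    exact mkPi0_eq (rdistrib _ _ _)
  zero_mul x := by
    induction x using Quotient.ind
    exact mkPi0_eq (zeroMulIso _)
  mul_zero x := by
    induction x using Quotient.ind
    exact mkPi0_eq (mulZeroIso _)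
  mul_assoc x y z := by
    induction x using Quotient.ind
    induction y using Quotient.ind
    induction z using Quotient.ind
    exact mkPi0_eq (massoc _ _ _)
  one := mkPi0 (one : R)
  one_mul x := by
    induction x using Quotient.ind
    exact mkPi0_eq (lunit _)
  mul_one x := by
    induction x using Quotient.ind
    exact mkPi0_eq (runit _)
  npow := npowRec

variable {R}

/-! ### The bimodule actions -/

def lsmulObj (r : R) (β : 𝟙_ R ⟶ 𝟙_ R) : 𝟙_ R ⟶ 𝟙_ R :=
  conj (mulZeroIso r) (mulHom (𝟙 r) β)

def rsmulObj (β : 𝟙_ R ⟶ 𝟙_ R) (r : R) : 𝟙_ R ⟶ 𝟙_ R :=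
  conj (zeroMulIso r) (mulHom β (𝟙 r))

theorem lsmulObj_def (r : R) (β : 𝟙_ R ⟶ 𝟙_ R) :
    lsmulObj r β = conj (mulZeroIso r) (mulHom (𝟙 r) β) := rfl

theorem rsmulObj_def (β : 𝟙_ R ⟶ 𝟙_ R) (r : R) :
    rsmulObj β r = conj (zeroMulIso r) (mulHom β (𝟙 r)) := rfl

theorem conj_mulHom_right {x : R} (f : x ≅ 𝟙_ R) (φ : x ⟶ x) (s : R) :
    mulHom (conj f φ) (𝟙 s) =
      (mulIso f (Iso.refl s)).inv ≫ mulHom φ (𝟙 s) ≫ (mulIso f (Iso.refl s)).hom := by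
  simp only [mulIso_inv, mulIso_hom, Iso.refl_hom, Iso.refl_inv, conj]
  rw [← mulHom_comp, ← mulHom_comp]
  simp

theorem conj_mulHom_left {x : R} (r : R) (f : x ≅ 𝟙_ R) (φ : x ⟶ x) :
    mulHom (𝟙 r) (conj f φ) =
      (mulIso (Iso.refl r) f).inv ≫ mulHom (𝟙 r) φ ≫ (mulIso (Iso.refl r) f).hom := by
  simp only [mulIso_inv, mulIso_hom, Iso.refl_hom, Iso.refl_inv, conj]
  rw [← mulHom_comp, ← mulHom_comp]
  simp

theorem rsmulObj_conj {x : R} (f : x ≅ 𝟙_ R) (φ : x ⟶ x) (s : R) :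
    rsmulObj (conj f φ) s = conj (mulIso f (Iso.refl s) ≪≫ zeroMulIso s) (mulHom φ (𝟙 s)) := by
  rw [rsmulObj_def, conj_mulHom_right, ← conj_trans]

theorem lsmulObj_conj (r : R) {x : R} (f : x ≅ 𝟙_ R) (φ : x ⟶ x) :
    lsmulObj r (conj f φ) =
      conj (mulIso (Iso.refl r) f ≪≫ mulZeroIso r) (mulHom (𝟙 r) φ) := by
  rw [lsmulObj_def, conj_mulHom_left, ← conj_trans]

theorem lsmulObj_iso {a b : R} (e : a ≅ b) (β : 𝟙_ R ⟶ 𝟙_ R) :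
    lsmulObj a β = lsmulObj b β := by
  unfold lsmulObj
  rw [conj_indep (mulZeroIso a) (mulIso e (Iso.refl (𝟙_ R)) ≪≫ mulZeroIso b), conj_trans]
  congr 1
  simp only [mulIso_inv, mulIso_hom, Iso.refl_hom, Iso.refl_inv]
  rw [← mulHom_comp, ← mulHom_comp]
  simp

theorem rsmulObj_iso {a b : R} (e : a ≅ b) (β : 𝟙_ R ⟶ 𝟙_ R) :
    rsmulObj β a = rsmulObj β b := by
  unfold rsmulObj
  rw [conj_indep (zeroMulIso a) (mulIso (Iso.refl (𝟙_ R)) e ≪≫ zeroMulIso b), conj_trans]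
  congr 1
  simp only [mulIso_inv, mulIso_hom, Iso.refl_hom, Iso.refl_inv]
  rw [← mulHom_comp, ← mulHom_comp]
  simp

noncomputable def plsmul : Pi0 R → (𝟙_ R ⟶ 𝟙_ R) → (𝟙_ R ⟶ 𝟙_ R) :=
  fun x β => lsmulObj x.out β

noncomputable def prsmul : (𝟙_ R ⟶ 𝟙_ R) → Pi0 R → (𝟙_ R ⟶ 𝟙_ R) :=
  fun β x => rsmulObj β x.out

theorem out_iso (x : Pi0 R) (r : R) (h : x = mkPi0 r) : Nonempty (x.out ≅ r) :=
  Quotient.exact (x.out_eq.trans h)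

theorem plsmul_mk (r : R) (β : 𝟙_ R ⟶ 𝟙_ R) : plsmul (mkPi0 r) β = lsmulObj r β :=
  (out_iso _ r rfl).elim fun e => lsmulObj_iso e β

theorem prsmul_mk (r : R) (β : 𝟙_ R ⟶ 𝟙_ R) : prsmul β (mkPi0 r) = rsmulObj β r :=
  (out_iso _ r rfl).elim fun e => rsmulObj_iso e β

/-! ### Bimodule axioms on the level of objects -/

theorem lsmulObj_one (β : 𝟙_ R ⟶ 𝟙_ R) : lsmulObj (one : R) β = β := by
  rw [lsmulObj_def, conj_indep _ (lunit (𝟙_ R))]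
  rw [conj, lunit_natural, Iso.inv_hom_id_assoc]

theorem rsmulObj_one (β : 𝟙_ R ⟶ 𝟙_ R) : rsmulObj β (one : R) = β := by
  rw [rsmulObj_def, conj_indep _ (runit (𝟙_ R))]
  rw [conj, runit_natural, Iso.inv_hom_id_assoc]

theorem lsmulObj_comp (r : R) (β γ : 𝟙_ R ⟶ 𝟙_ R) :
    lsmulObj r (β ≫ γ) = lsmulObj r β ≫ lsmulObj r γ := by
  unfold lsmulObj
  rw [← conj_comp, ← mulHom_comp, Category.id_comp]

theorem rsmulObj_comp (r : R) (β γ : 𝟙_ R ⟶ 𝟙_ R) :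
    rsmulObj (β ≫ γ) r = rsmulObj β r ≫ rsmulObj γ r := by
  unfold rsmulObj
  rw [← conj_comp, ← mulHom_comp, Category.id_comp]

theorem lsmulObj_add (r s : R) (β : 𝟙_ R ⟶ 𝟙_ R) :
    lsmulObj (r ⊗ s) β = lsmulObj r β ≫ lsmulObj s β := by
  have hnat : (rdistrib r s (𝟙_ R)).inv ≫ mulHom (𝟙 (r ⊗ s)) β ≫ (rdistrib r s (𝟙_ R)).hom
      = mulHom (𝟙 r) β ⊗ₘ mulHom (𝟙 s) β := by
    have h := rdistrib_natural (𝟙 r) (𝟙 s) β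
    rw [id_tensorHom_id] at h
    rw [h, Iso.inv_hom_id_assoc]
  unfold lsmulObj
  rw [conj_indep _
      (rdistrib r s (𝟙_ R) ≪≫ (tensorIso (mulZeroIso r) (mulZeroIso s) ≪≫ ρ_ (𝟙_ R))),
    conj_trans, hnat, conj_tensor]

theorem rsmulObj_add (r s : R) (β : 𝟙_ R ⟶ 𝟙_ R) :
    rsmulObj β (r ⊗ s) = rsmulObj β r ≫ rsmulObj β s := by
  have hnat : (ldistrib (𝟙_ R) r s).inv ≫ mulHom β (𝟙 (r ⊗ s)) ≫ (ldistrib (𝟙_ R) r s).hom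
      = mulHom β (𝟙 r) ⊗ₘ mulHom β (𝟙 s) := by
    have h := ldistrib_natural β (𝟙 r) (𝟙 s)
    rw [id_tensorHom_id] at h
    rw [h, Iso.inv_hom_id_assoc]
  unfold rsmulObj
  rw [conj_indep _
      (ldistrib (𝟙_ R) r s ≪≫ (tensorIso (zeroMulIso r) (zeroMulIso s) ≪≫ ρ_ (𝟙_ R))),
    conj_trans, hnat, conj_tensor]

theorem lsmulObj_zero (β : 𝟙_ R ⟶ 𝟙_ R) : lsmulObj (𝟙_ R) β = 𝟙 (𝟙_ R) := by
  have h : lsmulObj (𝟙_ R) β = lsmulObj (𝟙_ R) β ≫ lsmulObj (𝟙_ R) β := by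
    rw [← lsmulObj_add]
    exact lsmulObj_iso (λ_ (𝟙_ R)).symm β
  exact ((cancel_epi (lsmulObj (𝟙_ R) β)).mp (by rw [Category.comp_id, ← h])).symm

theorem rsmulObj_zero (β : 𝟙_ R ⟶ 𝟙_ R) : rsmulObj β (𝟙_ R) = 𝟙 (𝟙_ R) := by
  have h : rsmulObj β (𝟙_ R) = rsmulObj β (𝟙_ R) ≫ rsmulObj β (𝟙_ R) := by
    rw [← rsmulObj_add]
    exact rsmulObj_iso (λ_ (𝟙_ R)).symm β
  exact ((cancel_epi (rsmulObj β (𝟙_ R))).mp (by rw [Category.comp_id, ← h])).symm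

theorem lsmulObj_mul (r s : R) (β : 𝟙_ R ⟶ 𝟙_ R) :
    lsmulObj (mul r s) β = lsmulObj r (lsmulObj s β) := by
  have hnat : (massoc r s (𝟙_ R)).inv ≫ mulHom (𝟙 (mul r s)) β ≫ (massoc r s (𝟙_ R)).hom
      = mulHom (𝟙 r) (mulHom (𝟙 s) β) := by
    have h := massoc_natural (𝟙 r) (𝟙 s) β
    rw [mulHom_id] at h
    rw [h, Iso.inv_hom_id_assoc]
  rw [lsmulObj_def (mul r s) β]
  rw [conj_indep _
      (massoc r s (𝟙_ R) ≪≫ (mulIso (Iso.refl r) (mulZeroIso s) ≪≫ mulZeroIso r)),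
    conj_trans, hnat]
  rw [lsmulObj_def s β, lsmulObj_conj]

theorem rsmulObj_mul (r s : R) (β : 𝟙_ R ⟶ 𝟙_ R) :
    rsmulObj β (mul r s) = rsmulObj (rsmulObj β r) s := by
  have hnat : (massoc (𝟙_ R) r s).hom ≫ mulHom β (𝟙 (mul r s)) ≫ (massoc (𝟙_ R) r s).inv
      = mulHom (mulHom β (𝟙 r)) (𝟙 s) := by
    have h := massoc_natural β (𝟙 r) (𝟙 s)
    rw [mulHom_id] at h
    rw [← Category.assoc, ← h, Category.assoc, Iso.hom_inv_id, Category.comp_id]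
  rw [rsmulObj_def β (mul r s)]
  rw [conj_indep _
      ((massoc (𝟙_ R) r s).symm ≪≫ (mulIso (zeroMulIso r) (Iso.refl s) ≪≫ zeroMulIso s)),
    conj_trans]
  simp only [Iso.symm_hom, Iso.symm_inv]
  rw [hnat]
  rw [rsmulObj_def β r, rsmulObj_conj]

theorem lr_comm (r s : R) (β : 𝟙_ R ⟶ 𝟙_ R) :
    rsmulObj (lsmulObj r β) s = lsmulObj r (rsmulObj β s) := by
  have hnat : (massoc r (𝟙_ R) s).inv ≫ mulHom (mulHom (𝟙 r) β) (𝟙 s) ≫ (massoc r (𝟙_ R) s).hom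
      = mulHom (𝟙 r) (mulHom β (𝟙 s)) := by
    have h := massoc_natural (𝟙 r) β (𝟙 s)
    rw [h, Iso.inv_hom_id_assoc]
  rw [lsmulObj_def r β, rsmulObj_conj]
  rw [conj_indep _
      (massoc r (𝟙_ R) s ≪≫ (mulIso (Iso.refl r) (zeroMulIso s) ≪≫ mulZeroIso r)),
    conj_trans, hnat]
  rw [rsmulObj_def β s, lsmulObj_conj]

end CatRingAux
open CatRingAux in
/-- For a categorical ring `R`, the set `π₀(R)` of isomorphism classes of
objects carries a ring structure induced by `+` and `·`; `π₁(R) = Aut(0)` is an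
abelian group (under composition) and carries a natural `π₀(R)`-bimodule
structure, the actions `r·β` and `β·r` being characterized as the deviations of
`r·(−)`, `(−)·r` applied to a pair of parallel morphisms with deviation `β`. -/
theorem pi0_ring_pi1_bimodule :
    ∃ inst : Ring (Pi0 R), Pi0RingCompat R inst ∧
      (∀ β γ : 𝟙_ R ⟶ 𝟙_ R, β ≫ γ = γ ≫ β) ∧
      ∃ (lsmul : Pi0 R → (𝟙_ R ⟶ 𝟙_ R) → (𝟙_ R ⟶ 𝟙_ R))
        (rsmul : (𝟙_ R ⟶ 𝟙_ R) → Pi0 R → (𝟙_ R ⟶ 𝟙_ R)),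
        Pi1BimoduleCompat R inst lsmul rsmul ∧
        (∀ (r : R) (β : 𝟙_ R ⟶ 𝟙_ R),
          IsDeviation (mulHom (𝟙 r) (𝟙 (𝟙_ R))) (mulHom (𝟙 r) (devRep β))
            (lsmul (mkPi0 r) β)) ∧
        (∀ (r : R) (β : 𝟙_ R ⟶ 𝟙_ R),
          IsDeviation (mulHom (𝟙 (𝟙_ R)) (𝟙 r)) (mulHom (devRep β) (𝟙 r))
            (rsmul β (mkPi0 r))) := by
  classical
  refine ⟨pi0Ring R, ⟨fun a b => rfl, fun a b => rfl, rfl, rfl⟩,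
    end_comm, plsmul, prsmul,
    ⟨?_, ?_, ?_, ?_, ?_, ?_, ?_, ?_, ?_, ?_, ?_⟩, ?_, ?_⟩
  · intro x y β
    induction x using Quotient.ind
    induction y using Quotient.ind
    rename_i a b
    show plsmul (mkPi0 (mul a b)) β = plsmul (mkPi0 a) (plsmul (mkPi0 b) β)
    rw [plsmul_mk, plsmul_mk, plsmul_mk, lsmulObj_mul]
  · intro β
    show plsmul (mkPi0 (one : R)) β = β
    rw [plsmul_mk, lsmulObj_one]
  · intro x β γ
    induction x using Quotient.ind
    rename_i a
    show plsmul (mkPi0 a) (β ≫ γ) = plsmul (mkPi0 a) β ≫ plsmul (mkPi0 a) γ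
    rw [plsmul_mk, plsmul_mk, plsmul_mk, lsmulObj_comp]
  · intro x y β
    induction x using Quotient.ind
    induction y using Quotient.ind
    rename_i a b
    show plsmul (mkPi0 (a ⊗ b)) β = plsmul (mkPi0 a) β ≫ plsmul (mkPi0 b) β
    rw [plsmul_mk, plsmul_mk, plsmul_mk, lsmulObj_add]
  · intro β
    show plsmul (mkPi0 (𝟙_ R)) β = 𝟙 (𝟙_ R)
    rw [plsmul_mk, lsmulObj_zero]
  · intro x y β
    induction x using Quotient.ind
    induction y using Quotient.ind
    rename_i a b
    show prsmul β (mkPi0 (mul a b)) = prsmul (prsmul β (mkPi0 a)) (mkPi0 b)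
    rw [prsmul_mk, prsmul_mk, prsmul_mk, rsmulObj_mul]
  · intro β
    show prsmul β (mkPi0 (one : R)) = β
    rw [prsmul_mk, rsmulObj_one]
  · intro x β γ
    induction x using Quotient.ind
    rename_i a
    show prsmul (β ≫ γ) (mkPi0 a) = prsmul β (mkPi0 a) ≫ prsmul γ (mkPi0 a)
    rw [prsmul_mk, prsmul_mk, prsmul_mk, rsmulObj_comp]
  · intro x y β
    induction x using Quotient.ind
    induction y using Quotient.ind
    rename_i a b
    show prsmul β (mkPi0 (a ⊗ b)) = prsmul β (mkPi0 a) ≫ prsmul β (mkPi0 b)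
    rw [prsmul_mk, prsmul_mk, prsmul_mk, rsmulObj_add]
  · intro β
    show prsmul β (mkPi0 (𝟙_ R)) = 𝟙 (𝟙_ R)
    rw [prsmul_mk, rsmulObj_zero]
  · intro x y β
    induction x using Quotient.ind
    induction y using Quotient.ind
    rename_i a b
    show prsmul (plsmul (mkPi0 a) β) (mkPi0 b) = plsmul (mkPi0 a) (prsmul β (mkPi0 b))
    rw [plsmul_mk, prsmul_mk, prsmul_mk, plsmul_mk, lr_comm]
  · intro r β
    show (mulHom (𝟙 r) (𝟙 (𝟙_ R)) ⊗ₘ plsmul (mkPi0 r) β) ≫ (ρ_ (mul r (𝟙_ R))).hom =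
      (ρ_ (mul r (𝟙_ R))).hom ≫ mulHom (𝟙 r) (devRep β)
    rw [plsmul_mk, mulHom_id, devRep_eq]
    exact dev_conj (mulZeroIso r) (mulHom (𝟙 r) β)
  · intro r β
    show (mulHom (𝟙 (𝟙_ R)) (𝟙 r) ⊗ₘ prsmul β (mkPi0 r)) ≫ (ρ_ (mul (𝟙_ R) r)).hom =
      (ρ_ (mul (𝟙_ R) r)).hom ≫ mulHom (devRep β) (𝟙 r)
    rw [prsmul_mk, mulHom_id, devRep_eq]
    exact dev_conj (zeroMulIso r) (mulHom β (𝟙 r))
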